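/- In any term T_n (n ≥ 1) of the look-and-say-again sequence with seed d ∈ {1,2,4,6}, the digit 3 never appears, and no run has length exceeding 6. -/

import Mathlib

/-- Run-length encoding of a digit string (a list of digits). -/
def rle : List ℕ → List (ℕ × ℕ)
  | [] => []
  | a :: t =>
    match rle t with
    | [] => [(a, 1)]
    | (b, n) :: r => if a = b then (a, n + 1) :: r else (a, 1) :: (b, n) :: r

/-- `P` is a run-length representation of the digit string `S`:
multiplicities are positive, adjacent base digits are distinct, and `S` is
the concatenation of the runs. -/
def IsRLE (S : List ℕ) (P : List (ℕ × ℕ)) : Prop :=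
  (∀ p ∈ P, 1 ≤ p.2) ∧ List.Chain' (fun p q => p.1 ≠ q.1) P ∧
    S = (P.map fun p => List.replicate p.2 p.1).flatten

/-- The look-and-say-again step: each run `a^n` is read off as `n n a a`. -/
def lsa (T : List ℕ) : List ℕ := (rle T).flatMap fun p => [p.2, p.2, p.1, p.1]

/-- Property `P`: every run has base digit in `{1,2,4,6}` and length in `{2,4,6}`. -/
def propP (T : List ℕ) : Prop :=
  ∀ p ∈ rle T, p.1 ∈ ({1, 2, 4, 6} : Set ℕ) ∧ p.2 ∈ ({2, 4, 6} : Set ℕ)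

lemma rle_cons_nil {t : List ℕ} (a : ℕ) (h : rle t = []) : rle (a :: t) = [(a, 1)] := by
  simp [rle, h]

lemma rle_cons_same {t : List ℕ} {b m r} (h : rle t = (b, m) :: r) :
    rle (b :: t) = (b, m + 1) :: r := by
  simp [rle, h]

lemma rle_cons_ne {t : List ℕ} {a b m r} (h : rle t = (b, m) :: r) (hab : a ≠ b) :
    rle (a :: t) = (a, 1) :: (b, m) :: r := by
  simp [rle, h, hab]

/-- every member of a list is the base digit of some run. -/
lemma mem_rle {T : List ℕ} {a : ℕ} (h : a ∈ T) : ∃ p ∈ rle T, p.1 = a := by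
  induction T with
  | nil => simp at h
  | cons x t ih =>
    rcases List.mem_cons.mp h with rfl | ha
    · rcases hr : rle t with _ | ⟨⟨b, m⟩, r⟩
      · exact ⟨(a, 1), by simp [rle_cons_nil a hr]⟩
      · by_cases hab : a = b
        · subst hab; exact ⟨(a, m + 1), by simp [rle_cons_same hr]⟩
        · exact ⟨(a, 1), by simp [rle_cons_ne hr hab]⟩
    · obtain ⟨p, hp, hpa⟩ := ih ha
      rcases hr : rle t with _ | ⟨⟨b, m⟩, r⟩
      · simp [hr] at hp
      · by_cases hxb : x = b
        · subst hxb
          rw [hr] at hp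
          rcases List.mem_cons.mp hp with rfl | hp'
        
          · exact ⟨(x, m + 1), by simp [rle_cons_same hr], hpa⟩
          · exact ⟨p, by simp [rle_cons_same hr, hp'], hpa⟩
        · refine ⟨p, ?_, hpa⟩
          rw [rle_cons_ne hr hxb]
          rw [hr] at hp
          simp [hp]

/-- adjacent runs of `rle` have distinct base digits. -/
lemma rle_chain' (T : List ℕ) : List.Chain' (fun p q => p.1 ≠ q.1) (rle T) := by
  induction T with
  | nil => simp [rle, List.Chain']
  | cons x t ih =>
    rcases hr : rle t with _ | ⟨⟨b, m⟩, r⟩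
    · simp [rle_cons_nil x hr, List.Chain']
    · by_cases hxb : x = b
      · subst hxb
        rw [rle_cons_same hr]
        rw [hr] at ih
        exact List.isChain_cons.mpr ⟨fun q hq => (List.isChain_cons.mp ih).1 q hq,
          (List.isChain_cons.mp ih).2⟩
      · rw [rle_cons_ne hr hxb]
        rw [hr] at ih
        exact List.isChain_cons_cons.mpr ⟨hxb, ih⟩

def good (p : ℕ × ℕ) : Prop :=
  (p.1 = 1 ∨ p.1 = 2 ∨ p.1 = 4 ∨ p.1 = 6) ∧ (p.2 = 2 ∨ p.2 = 4 ∨ p.2 = 6)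

/-- Key structural lemma: the RLE of the read-off of a good run list. -/
lemma key : ∀ L : List (ℕ × ℕ), (∀ p ∈ L, good p) →
    List.Chain' (fun p q => p.1 ≠ q.1) L →
    (L = [] ∨ ∃ a n m r, L.head? = some (a, n) ∧
      rle (L.flatMap fun p => [p.2, p.2, p.1, p.1]) = (n, m) :: r ∧
      (m = 2 ∨ m = 4 ∨ m = 6) ∧ (4 ≤ m → a = n) ∧
      ∀ p ∈ r, good p) := by
  intro L
  induction L with
  | nil => intro _ _; left; rfl
  | cons hd tl ih =>
    intro hg hc
    obtain ⟨a, n⟩ := hd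
    right
    have hgood : good (a, n) := hg _ List.mem_cons_self
    have hg' : ∀ p ∈ tl, good p := fun p hp => hg p (List.mem_cons_of_mem _ hp)
    have hc' : List.Chain' (fun p q => p.1 ≠ q.1) tl := hc.tail
    rcases ih hg' hc' with rfl | ⟨a', n', m, r, hhd, hrle, hm, him, hr⟩
    · -- tl = []
      simp only [List.flatMap_cons, List.flatMap_nil, List.append_nil]
      have h0 : rle ([] : List ℕ) = [] := rfl
      have h1 := rle_cons_nil a h0
      have h2 := rle_cons_same h1
      by_cases hna : n = a
      · subst hna
        have h3 := rle_cons_same h2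
        have h4 := rle_cons_same h3
        exact ⟨n, n, 4, [], rfl, h4, Or.inr (Or.inl rfl), fun _ => rfl, by simp⟩
      · have h3 := rle_cons_ne h2 hna
        have h4 := rle_cons_same h3
        refine ⟨a, n, 2, [(a, 2)], rfl, h4, Or.inl rfl, fun h => absurd h (by norm_num), ?_⟩
        intro p hp
        simp at hp
        subst hp
        exact ⟨hgood.1, Or.inl rfl⟩
    · -- tl = (a', n') :: tl'
      obtain ⟨tl', rfl⟩ : ∃ tl', tl = (a', n') :: tl' := by
        cases tl with
        | nil => simp at hhd
        | cons x t =>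
          simp only [List.head?_cons, Option.some.injEq] at hhd
          exact ⟨t, by rw [hhd]⟩
      have haa' : a ≠ a' := (List.isChain_cons_cons.mp hc).1
      have hgood' : good (a', n') := hg' _ List.mem_cons_self
      simp only [List.flatMap_cons, List.cons_append, List.nil_append] at hrle ⊢
      set rest := n' :: n' :: a' :: a' :: (tl'.flatMap fun p => [p.2, p.2, p.1, p.1]) with hrest
      clear_value rest
      -- rest = n' :: n' :: a' :: a' :: ...
      by_cases han' : a = n'
      · -- merge: m must be 2
        have hm2 : m = 2 := by
          rcases hm with h | h | h
          · exact h
          all_goals exact absurd (han'.trans (him (by omega)).symm) haa'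
        subst hm2
        have h1 : rle (a :: rest) = (a, 3) :: r := han' ▸ rle_cons_same (han' ▸ hrle)
        have h2 : rle (a :: a :: rest) = (a, 4) :: r := rle_cons_same h1
        by_cases hna : n = a
        · subst hna
          have h3 := rle_cons_same h2
          have h4 := rle_cons_same h3
          exact ⟨n, n, 6, r, rfl, h4, Or.inr (Or.inr rfl), fun _ => rfl, hr⟩
        · have h3 := rle_cons_ne h2 hna
          have h4 := rle_cons_same h3
          refine ⟨a, n, 2, (a, 4) :: r, rfl, h4, Or.inl rfl, fun h => absurd h (by norm_num), ?_⟩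
          intro p hp
          rcases List.mem_cons.mp hp with rfl | hp'
          · exact ⟨hgood.1, Or.inr (Or.inl rfl)⟩
          · exact hr p hp'
      · have h1 : rle (a :: rest) = (a, 1) :: (n', m) :: r := rle_cons_ne hrle han'
        have h2 : rle (a :: a :: rest) = (a, 2) :: (n', m) :: r := rle_cons_same h1
        have hgn' : good (n', m) := ⟨by have := hgood'.2; simp only at this; omega, hm⟩
        by_cases hna : n = a
        · subst hna
          have h3 := rle_cons_same h2
          have h4 := rle_cons_same h3
          refine ⟨n, n, 4, (n', m) :: r, rfl, h4, Or.inr (Or.inl rfl), fun _ => rfl, ?_⟩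
          intro p hp
          rcases List.mem_cons.mp hp with rfl | hp'
          · exact hgn'
          · exact hr p hp'
        · have h3 := rle_cons_ne h2 hna
          have h4 := rle_cons_same h3
          refine ⟨a, n, 2, (a, 2) :: (n', m) :: r, rfl, h4, Or.inl rfl, fun h => absurd h (by norm_num), ?_⟩
          intro p hp
          rcases List.mem_cons.mp hp with rfl | hp'
          · exact ⟨hgood.1, Or.inl rfl⟩
          rcases List.mem_cons.mp hp' with rfl | hp''
          · exact hgn'
          · exact hr p hp''

lemma propP_iff_good (T : List ℕ) : propP T ↔ ∀ p ∈ rle T, good p := by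
  unfold propP good
  simp [Set.mem_insert_iff]

lemma propP_lsa {T : List ℕ} (h : propP T) : propP (lsa T) := by
  rw [propP_iff_good] at h ⊢
  unfold lsa
  rcases key (rle T) h (rle_chain' T) with h0 | ⟨a, n, m, r, hhd, hrle, hm, him, hr⟩
  · rw [h0]; intro p hp; simp [rle] at hp
  · rw [hrle]
    intro p hp
    rcases List.mem_cons.mp hp with rfl | hp'
    · have : (a, n) ∈ rle T := by
        cases hE : rle T with
        | nil => simp [hE] at hhd
        | cons x t => simp [hE] at hhd; simp [hhd]
      have := h _ this
      refine ⟨?_, hm⟩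
      have h2 := this.2
      simp only at h2 ⊢
      omega
    · exact hr p hp'

lemma propP_iterate (d : ℕ) (hd : d ∈ ({1, 2, 4, 6} : Set ℕ)) :
    ∀ n : ℕ, 1 ≤ n → propP (lsa^[n] [d]) := by
  have base : propP (lsa [d]) := by
    have h0 : rle ([] : List ℕ) = [] := rfl
    have h1 := rle_cons_nil d h0
    have hl : lsa [d] = [1, 1, d, d] := by simp [lsa, h1]
    rw [propP_iff_good, hl]
    have h2 := rle_cons_same h1
    by_cases hd1 : d = 1
    · subst hd1
      have h3 := rle_cons_same h2
      have h4 := rle_cons_same h3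
      rw [h4]
      intro p hp; simp at hp; subst hp
      exact ⟨by tauto, by tauto⟩
    · have h3 := rle_cons_ne h2 (fun h => hd1 h.symm)
      have h4 := rle_cons_same h3
      rw [h4]
      intro p hp
      simp only [List.mem_cons, List.not_mem_nil, or_false] at hp
      rcases hp with rfl | rfl
      · exact ⟨by tauto, by tauto⟩
      · refine ⟨?_, by tauto⟩
        simp [Set.mem_insert_iff] at hd
        tauto
  intro n hn
  induction n with
  | zero => omega
  | succ k ih =>
    rcases Nat.eq_or_lt_of_le hn with h | h
    · rw [← h]; simpa using base
    · have hk : 1 ≤ k := by omega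
      rw [Function.iterate_succ_apply']
      exact propP_lsa (ih hk)

/-- For seeds in `{1,2,4,6}`, the digit 3 never appears in any term `T_n`
with `n ≥ 1`, and no run of such a term has length exceeding 6. -/
theorem lsa_seq_no_three (d : ℕ) (hd : d ∈ ({1, 2, 4, 6} : Set ℕ)) :
    ∀ n : ℕ, 1 ≤ n →
      3 ∉ lsa^[n] [d] ∧ ∀ p ∈ rle (lsa^[n] [d]), p.2 ≤ 6 := by
  intro n hn
  have hP := propP_iterate d hd n hn
  rw [propP_iff_good] at hP
  constructor
  · intro h3
    obtain ⟨p, hp, hpa⟩ := mem_rle h3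
    have := (hP p hp).1
    omega
  · intro p hp
    have := (hP p hp).2
    omega
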